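/- arXiv:2507.07007 — 5 statements merged into one kernel-verified Lean document; each statement's English description precedes it below -/
import Mathlib

section
/- Let (m_1,r_1),…,(m_n,r_n) with m_i ∈ ℝ², r_i > 0, and let H_v : S¹ → ℕ be the sum of the signal functions. For every x ∈ S¹, the map t ↦ H_v(R_t x) is constant on some interval (0,δ) and constant on some interval (−δ,0) for some δ > 0 (where R_t denotes rotation of the plane by angle t about the origin); in particular, H_v has only finitely many discontinuity points on S¹. -/
noncomputable section

open scoped BigOperators
open Classical

/-- The unit circle `S¹` in the plane (modeled as `ℂ ≅ ℝ²` with the Euclidean norm). -/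
def S1 : Set ℂ := {x : ℂ | ‖x‖ = 1}

/-- The signal function `h_{(m,r)}`: indicator of the closed disk of center `m`, radius `r`. -/
def signal (m : ℂ) (r : ℝ) (x : ℂ) : ℕ := if ‖x - m‖ ≤ r then 1 else 0

/-- The boundary trace `∂h_{(m,r)} = {x ∈ S¹ : ‖x − m‖ = r}`. -/
def bTrace (m : ℂ) (r : ℝ) : Set ℂ := {x : ℂ | ‖x‖ = 1 ∧ ‖x - m‖ = r}

/-- The sum `H_v` of the signal functions of the disk data `v = ((m_i, r_i))_{i<n}`. -/
def Hsum {n : ℕ} (v : Fin n → ℂ × ℝ) (x : ℂ) : ℕ := ∑ i, signal (v i).1 (v i).2 x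

/-- Rotation of the plane by angle `t` about the origin. -/
def rot (t : ℝ) (x : ℂ) : ℂ := Complex.exp (t * Complex.I) * x

/-- `H(x⁺) = a`: `H` equals `a` just after `x` (counterclockwise). -/
def rightVal (H : ℂ → ℕ) (x : ℂ) (a : ℕ) : Prop :=
  ∃ δ > (0 : ℝ), ∀ t : ℝ, 0 < t → t < δ → H (rot t x) = a

/-- `H(x⁻) = b`: `H` equals `b` just before `x`. -/
def leftVal (H : ℂ → ℕ) (x : ℂ) (b : ℕ) : Prop :=
  ∃ δ > (0 : ℝ), ∀ t : ℝ, -δ < t → t < 0 → H (rot t x) = b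

/-- `H` is properly upper semicontinuous on `S¹`: at each point both one-sided limits
exist and the value equals their maximum. -/
def ProperlyUSC (H : ℂ → ℕ) : Prop :=
  ∀ x ∈ S1, ∃ a b : ℕ, rightVal H x a ∧ leftVal H x b ∧ H x = max a b

/-- `H* = max_{S¹} H`. -/
def maxOnS1 (H : ℂ → ℕ) : ℕ := sSup (H '' S1)

/-- `H_* = min_{S¹} H`. -/
def minOnS1 (H : ℂ → ℕ) : ℕ := sInf (H '' S1)

/-- The superlevel set `{x ∈ S¹ : H(x) ≥ k}`. -/
def superlevel (H : ℂ → ℕ) (k : ℕ) : Set ℂ := {x ∈ S1 | k ≤ H x}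

/-- Number of connected components of a subset of the plane. -/
def numCC (A : Set ℂ) : ℕ := Nat.card (ConnectedComponents ↥A)

/-- `τ(H) = Σ_{k=H_*+1}^{H*} (c_k(H) − 1)`. -/
def tau (H : ℂ → ℕ) : ℕ :=
  ∑ k ∈ Finset.Icc (minOnS1 H + 1) (maxOnS1 H), (numCC (superlevel H k) - 1)

/-- `ρ` for the degrees-of-freedom count. -/
def rho (m : ℂ) (r : ℝ) : ℕ :=
  if bTrace m r = ∅ then 3
  else if (bTrace m r).ncard = 1 ∨ (bTrace m r).ncard = 2 then 1
  else 0

/-- `N`-degrees of freedom of a decomposition with `n ≤ N` signals. -/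
def DoF (N : ℕ) {n : ℕ} (v : Fin n → ℂ × ℝ) : ℕ :=
  3 * (N - n) + ∑ i, rho (v i).1 (v i).2

/-! ### Auxiliary lemmas for `stmt1` -/

lemma rot_zero' (x : ℂ) : rot 0 x = x := by simp [rot]

lemma norm_rot (t : ℝ) (x : ℂ) : ‖rot t x‖ = ‖x‖ := by
  simp [rot, Complex.norm_exp_ofReal_mul_I]

/-- The squared-distance function along the rotation orbit is real-analytic. -/
lemma analyticAt_g (x m : ℂ) (r : ℝ) :
    AnalyticAt ℝ (fun t : ℝ => Complex.normSq (rot t x - m) - r ^ 2) 0 := by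
  have hl : AnalyticAt ℝ (fun t : ℝ => (t : ℂ) * Complex.I) 0 :=
    (Complex.ofRealCLM.analyticAt (0 : ℝ)).mul analyticAt_const
  have he : AnalyticAt ℝ (fun t : ℝ => Complex.exp ((t : ℂ) * Complex.I)) 0 :=
    (analyticAt_cexp.restrictScalars (𝕜 := ℝ)).comp hl
  have h1 : AnalyticAt ℝ (fun t : ℝ => rot t x - m) 0 :=
    (he.mul analyticAt_const).sub analyticAt_const
  have hre : AnalyticAt ℝ (fun t : ℝ => (rot t x - m).re) 0 :=
    (Complex.reCLM.analyticAt _).comp h1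
  have him : AnalyticAt ℝ (fun t : ℝ => (rot t x - m).im) 0 :=
    (Complex.imCLM.analyticAt _).comp h1
  have : AnalyticAt ℝ (fun t : ℝ =>
      (rot t x - m).re * (rot t x - m).re + (rot t x - m).im * (rot t x - m).im - r ^ 2) 0 :=
    ((hre.mul hre).add (him.mul him)).sub analyticAt_const
  refine this.congr ?_
  filter_upwards with t
  simp [Complex.normSq_apply]

lemma signal_iff (m : ℂ) (r : ℝ) (hr : 0 < r) (z : ℂ) :
    signal m r z = if Complex.normSq (z - m) - r ^ 2 ≤ 0 then 1 else 0 := by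
  unfold signal
  congr 1
  rw [eq_iff_iff, sub_nonpos, Complex.normSq_eq_norm_sq]
  exact (pow_le_pow_iff_left₀ (norm_nonneg _) hr.le two_ne_zero).symm

/-- A continuous function with no zeros on an interval has constant sign there. -/
lemma sign_const {g : ℝ → ℝ} (hc : Continuous g) {a b : ℝ}
    (hne : ∀ t ∈ Set.Ioo a b, g t ≠ 0) :
    ∀ s ∈ Set.Ioo a b, ∀ t ∈ Set.Ioo a b, (g s ≤ 0 ↔ g t ≤ 0) := by
  suffices h : ∀ s ∈ Set.Ioo a b, ∀ t ∈ Set.Ioo a b, g s ≤ 0 → g t ≤ 0 by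
    intro s hs t ht; exact ⟨h s hs t ht, h t ht s hs⟩
  intro s hs t ht hgs
  by_contra hgt
  push_neg at hgt
  have hgs' : g s < 0 := lt_of_le_of_ne hgs (hne s hs)
  rcases lt_trichotomy s t with hst | hst | hst
  · have := intermediate_value_Ioo hst.le hc.continuousOn (a := s) (b := t)
    obtain ⟨u, hu, hu0⟩ := this ⟨hgs', hgt⟩
    exact hne u ⟨lt_trans hs.1 hu.1, lt_trans hu.2 ht.2⟩ hu0
  · exact absurd (hst ▸ hgs') (not_lt.mpr hgt.le)
  · have := intermediate_value_Ioo' hst.le hc.continuousOn (a := t) (b := s)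
    obtain ⟨u, hu, hu0⟩ := this ⟨hgs', hgt⟩
    exact hne u ⟨lt_trans ht.1 hu.1, lt_trans hu.2 hs.2⟩ hu0

/-- One signal is constant on small one-sided arcs. -/
lemma signal_const (m x : ℂ) (r : ℝ) (hr : 0 < r) :
    ∃ δ > (0 : ℝ),
      (∀ s ∈ Set.Ioo (0 : ℝ) δ, ∀ t ∈ Set.Ioo (0 : ℝ) δ,
        signal m r (rot s x) = signal m r (rot t x)) ∧
      (∀ s ∈ Set.Ioo (-δ) (0 : ℝ), ∀ t ∈ Set.Ioo (-δ) (0 : ℝ),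
        signal m r (rot s x) = signal m r (rot t x)) := by
  set g : ℝ → ℝ := fun t => Complex.normSq (rot t x - m) - r ^ 2 with hgdef
  have hgc : Continuous g := by
    apply Continuous.sub ?_ continuous_const
    apply Complex.continuous_normSq.comp
    apply Continuous.sub ?_ continuous_const
    exact (Complex.continuous_exp.comp ((Complex.continuous_ofReal.mul
      continuous_const))).mul continuous_const
  have hkey : ∀ t : ℝ, signal m r (rot t x) = if g t ≤ 0 then 1 else 0 := fun t =>
    signal_iff m r hr (rot t x)
  rcases (analyticAt_g x m r).eventually_eq_zero_or_eventually_ne_zero with h | h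
  · rw [Metric.eventually_nhds_iff] at h
    obtain ⟨δ, hδ, hδ'⟩ := h
    have hz : ∀ u, u ∈ Set.Ioo (-δ) δ → g u = 0 := by
      intro u hu
      exact hδ' (by rw [Real.dist_eq, sub_zero, abs_lt]; exact ⟨hu.1, hu.2⟩)
    refine ⟨δ, hδ, fun s hs t ht => ?_, fun s hs t ht => ?_⟩
    · rw [hkey, hkey, hz s ⟨by linarith [hs.1], hs.2⟩, hz t ⟨by linarith [ht.1], ht.2⟩]
    · rw [hkey, hkey, hz s ⟨hs.1, by linarith [hs.2]⟩, hz t ⟨ht.1, by linarith [ht.2]⟩]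
  · rw [eventually_nhdsWithin_iff, Metric.eventually_nhds_iff] at h
    obtain ⟨δ, hδ, hδ'⟩ := h
    have hne1 : ∀ t ∈ Set.Ioo (0 : ℝ) δ, g t ≠ 0 := by
      intro t ht
      refine hδ' ?_ ht.1.ne'
      rw [Real.dist_eq, sub_zero, abs_lt]; exact ⟨lt_trans (neg_neg_iff_pos.mpr hδ) ht.1, ht.2⟩
    have hne2 : ∀ t ∈ Set.Ioo (-δ) (0 : ℝ), g t ≠ 0 := by
      intro t ht
      refine hδ' ?_ ht.2.ne
      rw [Real.dist_eq, sub_zero, abs_lt]; exact ⟨ht.1, lt_trans ht.2 hδ⟩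
    refine ⟨δ, hδ, fun s hs t ht => ?_, fun s hs t ht => ?_⟩
    · rw [hkey, hkey]
      simp only [sign_const hgc hne1 s hs t ht]
    · rw [hkey, hkey]
      simp only [sign_const hgc hne2 s hs t ht]

lemma exists_pos_forall_fin {n : ℕ} (P : Fin n → ℝ → Prop)
    (hmono : ∀ i δ δ', 0 < δ' → δ' ≤ δ → P i δ → P i δ')
    (h : ∀ i, ∃ δ > (0 : ℝ), P i δ) : ∃ δ > (0 : ℝ), ∀ i, P i δ := by
  induction n with
  | zero => exact ⟨1, one_pos, fun i => i.elim0⟩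
  | succ k ih =>
    obtain ⟨δ₁, hδ₁, h1⟩ := ih (fun i => P i.succ) (fun i => hmono i.succ) (fun i => h i.succ)
    obtain ⟨δ₂, hδ₂, h2⟩ := h 0
    have hmin : (0 : ℝ) < min δ₁ δ₂ := lt_min hδ₁ hδ₂
    refine ⟨min δ₁ δ₂, hmin, fun i => ?_⟩
    refine Fin.cases ?_ ?_ i
    · exact hmono 0 δ₂ _ hmin (min_le_right _ _) h2
    · intro j; exact hmono _ δ₁ _ hmin (min_le_left _ _) (h1 j)

/-- `Hsum` is constant on small one-sided arcs around any point. -/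
lemma Hsum_const {n : ℕ} (v : Fin n → ℂ × ℝ) (hr : ∀ i, 0 < (v i).2) (x : ℂ) :
    ∃ δ > (0 : ℝ),
      (∀ s ∈ Set.Ioo (0 : ℝ) δ, ∀ t ∈ Set.Ioo (0 : ℝ) δ,
        Hsum v (rot s x) = Hsum v (rot t x)) ∧
      (∀ s ∈ Set.Ioo (-δ) (0 : ℝ), ∀ t ∈ Set.Ioo (-δ) (0 : ℝ),
        Hsum v (rot s x) = Hsum v (rot t x)) := by
  set P : Fin n → ℝ → Prop := fun i δ =>
      (∀ s ∈ Set.Ioo (0 : ℝ) δ, ∀ t ∈ Set.Ioo (0 : ℝ) δ,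
        signal (v i).1 (v i).2 (rot s x) = signal (v i).1 (v i).2 (rot t x)) ∧
      (∀ s ∈ Set.Ioo (-δ) (0 : ℝ), ∀ t ∈ Set.Ioo (-δ) (0 : ℝ),
        signal (v i).1 (v i).2 (rot s x) = signal (v i).1 (v i).2 (rot t x)) with hP
  have hmono : ∀ i δ δ', 0 < δ' → δ' ≤ δ → P i δ → P i δ' := by
    intro i δ δ' _ hle ⟨h1, h2⟩
    constructor
    · intro s hs t ht
      exact h1 s ⟨hs.1, lt_of_lt_of_le hs.2 hle⟩ t ⟨ht.1, lt_of_lt_of_le ht.2 hle⟩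
    · intro s hs t ht
      exact h2 s ⟨lt_of_le_of_lt (neg_le_neg hle) hs.1, hs.2⟩
        t ⟨lt_of_le_of_lt (neg_le_neg hle) ht.1, ht.2⟩
  obtain ⟨δ, hδ, hall⟩ := exists_pos_forall_fin P hmono
    (fun i => signal_const (v i).1 x (v i).2 (hr i))
  refine ⟨δ, hδ, fun s hs t ht => ?_, fun s hs t ht => ?_⟩
  · exact Finset.sum_congr rfl fun i _ => (hall i).1 s hs t ht
  · exact Finset.sum_congr rfl fun i _ => (hall i).2 s hs t ht

/-- Points of `S¹` near `rot t x` lie on the rotation arc through `x`. -/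
lemma rot_image_mem_nhdsWithin (x : ℂ) (hx : x ∈ S1) {I : Set ℝ} (hI : IsOpen I)
    {t : ℝ} (ht : t ∈ I) :
    (fun s => rot s x) '' I ∈ nhdsWithin (rot t x) S1 := by
  set y := rot t x with hy
  have hyn : ‖y‖ = 1 := by rw [hy, norm_rot]; exact hx
  have hy0 : y ≠ 0 := by intro h; rw [h] at hyn; simp at hyn
  have harg : ContinuousAt (fun z : ℂ => t + (z / y).arg) y := by
    refine continuousAt_const.add ?_
    have h1 : ContinuousAt (fun z : ℂ => z / y) y := continuousAt_id.div_const y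
    have : (fun z : ℂ => (z / y).arg) = Complex.arg ∘ (fun z : ℂ => z / y) := rfl
    rw [this]
    refine ContinuousAt.comp ?_ h1
    have : y / y = 1 := div_self hy0
    rw [this]
    exact Complex.continuousAt_arg (by simp [Complex.slitPlane])
  have hval : t + ((y / y).arg) = t := by rw [div_self hy0, Complex.arg_one, add_zero]
  have hmem : ∀ᶠ z in nhds y, t + (z / y).arg ∈ I := by
    have := harg.preimage_mem_nhds (hI.mem_nhds (by simpa [hval] using ht))
    exact this
  filter_upwards [self_mem_nhdsWithin, nhdsWithin_le_nhds hmem] with z hz1 hz2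
  refine ⟨t + (z / y).arg, hz2, ?_⟩
  have hzn : ‖z‖ = 1 := hz1
  have habs : ‖z / y‖ = 1 := by
    rw [norm_div]
    rw [hzn, hyn]; norm_num
  have hexp : Complex.exp ((z / y).arg * Complex.I) = z / y := by
    have := Complex.norm_mul_exp_arg_mul_I (z / y)
    rwa [habs, Complex.ofReal_one, one_mul] at this
  show rot (t + (z / y).arg) x = z
  rw [rot]
  push_cast
  rw [add_mul, Complex.exp_add]
  have hyx : Complex.exp ((t : ℂ) * Complex.I) * x = y := rfl
  calc Complex.exp ((t : ℂ) * Complex.I) * Complex.exp ((z / y).arg * Complex.I) * x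
      = (Complex.exp ((t : ℂ) * Complex.I) * x) * (z / y) := by rw [hexp]; ring
    _ = y * (z / y) := by rw [hyx]
    _ = z := by rw [mul_comm, div_mul_cancel₀ _ hy0]

/-- `H` is continuous within `S¹` at interior points of arcs on which it is constant. -/
lemma continuousWithinAt_of_const_arc {H : ℂ → ℕ} (x : ℂ) (hx : x ∈ S1) {I : Set ℝ}
    (hI : IsOpen I) (hconst : ∀ s ∈ I, ∀ s' ∈ I, H (rot s x) = H (rot s' x))
    {t : ℝ} (ht : t ∈ I) : ContinuousWithinAt H S1 (rot t x) := by
  have hA := rot_image_mem_nhdsWithin x hx hI ht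
  have hev : ∀ᶠ z in nhdsWithin (rot t x) S1, H z = H (rot t x) := by
    filter_upwards [hA] with z hz
    obtain ⟨s, hs, rfl⟩ := hz
    exact hconst s hs t ht
  exact Filter.Tendsto.congr' (by filter_upwards [hev] with z h using h.symm)
    tendsto_const_nhds

theorem stmt1' {n : ℕ} (v : Fin n → ℂ × ℝ) (hr : ∀ i, 0 < (v i).2) :
    (∀ x ∈ S1, (∃ a : ℕ, rightVal (Hsum v) x a) ∧ (∃ b : ℕ, leftVal (Hsum v) x b)) ∧
    {x ∈ S1 | ¬ ContinuousWithinAt (Hsum v) S1 x}.Finite := by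
  constructor
  · intro x _
    obtain ⟨δ, hδ, h1, h2⟩ := Hsum_const v hr x
    constructor
    · exact ⟨Hsum v (rot (δ / 2) x), δ, hδ, fun t ht1 ht2 =>
        h1 t ⟨ht1, ht2⟩ (δ / 2) ⟨half_pos hδ, half_lt_self hδ⟩⟩
    · exact ⟨Hsum v (rot (-(δ / 2)) x), δ, hδ, fun t ht1 ht2 =>
        h2 t ⟨ht1, ht2⟩ (-(δ / 2)) ⟨by linarith, by linarith⟩⟩
  · have hU : ∀ x : ℂ, ∃ ε > (0 : ℝ), x ∈ S1 →
        ∀ z ∈ Metric.ball x ε ∩ S1, z ≠ x → ContinuousWithinAt (Hsum v) S1 z := by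
      intro x
      by_cases hx : x ∈ S1
      · obtain ⟨δ, hδ, h1, h2⟩ := Hsum_const v hr x
        have h0mem : (0 : ℝ) ∈ Set.Ioo (-δ) δ := ⟨neg_lt_zero.mpr hδ, hδ⟩
        have hA := rot_image_mem_nhdsWithin x hx isOpen_Ioo h0mem
        rw [rot_zero'] at hA
        rw [Metric.mem_nhdsWithin_iff] at hA
        obtain ⟨ε, hε, hsub⟩ := hA
        refine ⟨ε, hε, fun _ z hz hzx => ?_⟩
        obtain ⟨s, hs, rfl⟩ := hsub hz
        have hs0 : s ≠ 0 := by rintro rfl; exact hzx (rot_zero' x)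
        rcases hs0.lt_or_gt with hneg | hpos
        · exact continuousWithinAt_of_const_arc x hx isOpen_Ioo
            (fun a ha b hb => h2 a ha b hb) ⟨hs.1, hneg⟩
        · exact continuousWithinAt_of_const_arc x hx isOpen_Ioo
            (fun a ha b hb => h1 a ha b hb) ⟨hpos, hs.2⟩
      · exact ⟨1, one_pos, fun h => absurd h hx⟩
    choose ε hε hprop using hU
    have hS1c : IsCompact S1 := by
      have hset : S1 = Metric.sphere (0 : ℂ) 1 := by
        ext z; simp [S1, Metric.mem_sphere, dist_zero_right]
      rw [hset]; exact isCompact_sphere 0 1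
    obtain ⟨T, hT1, hT2⟩ := hS1c.elim_nhds_subcover (fun x => Metric.ball x (ε x))
      (fun x _ => Metric.ball_mem_nhds x (hε x))
    refine Set.Finite.subset T.finite_toSet ?_
    rintro z ⟨hzS, hzD⟩
    obtain ⟨x, hxT, hzball⟩ := Set.mem_iUnion₂.mp (hT2 hzS)
    rcases eq_or_ne z x with rfl | hne
    · exact hxT
    · exact absurd (hprop x (hT1 x hxT) z ⟨hzball, hzS⟩ hne) hzD

/-- the sum of signal functions is constant on small one-sided arcs
around every point of `S¹`, and has only finitely many discontinuity points on `S¹`. -/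
theorem stmt1 {n : ℕ} (v : Fin n → ℂ × ℝ) (hr : ∀ i, 0 < (v i).2) :
    (∀ x ∈ S1, (∃ a : ℕ, rightVal (Hsum v) x a) ∧ (∃ b : ℕ, leftVal (Hsum v) x b)) ∧
    {x ∈ S1 | ¬ ContinuousWithinAt (Hsum v) S1 x}.Finite := by
  exact stmt1' v hr
end
end

section
/- Let (m_1,r_1),…,(m_n,r_n) with m_i ∈ ℝ², r_i > 0, and let H_v : S¹ → ℕ be the sum of the signal functions. A point x ∈ S¹ is a discontinuity point of H_v (with respect to the subspace topology of S¹) if and only if there exists an index i such that x ∈ ∂h_{(m_i,r_i)} and S¹ is not contained in the closed disk {y ∈ ℝ² : ‖y − m_i‖ ≤ r_i}. -/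
noncomputable section

open scoped BigOperators
open Classical

-- helper 1: a ≤ t*C for all small t>0 implies a ≤ 0
lemma aux_nonpos {a C ε : ℝ} (hε : 0 < ε)
    (h : ∀ t : ℝ, 0 < t → t < ε → a ≤ t * C) : a ≤ 0 := by
  by_contra hlt
  push_neg at hlt
  have hC : 0 < C := by
    have := h (min (ε/2) (a/(2*(|C|+1)))) (by positivity)
      (lt_of_le_of_lt (min_le_left _ _) (by linarith))
    nlinarith [min_le_right (ε/2) (a/(2*(|C|+1))), abs_nonneg C,
      le_abs_self C, min_le_left (ε/2) (a/(2*(|C|+1))),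
      lt_min (show (0:ℝ) < ε/2 by linarith) (show (0:ℝ) < a/(2*(|C|+1)) by positivity)]
  set t := min (ε/2) (a/(2*C)) with ht
  have ht1 : 0 < t := lt_min (by linarith) (by positivity)
  have ht2 : t < ε := lt_of_le_of_lt (min_le_left _ _) (by linarith)
  have h3 := h t ht1 ht2
  have h4 : t ≤ a/(2*C) := min_le_right _ _
  have h5 : t * C ≤ a/(2*C) * C := mul_le_mul_of_nonneg_right h4 hC.le
  have h6 : a/(2*C)*C = a/2 := by field_simp
  linarith

-- helper 2: chord bound
lemma exp_I_sub_one_norm_le (t : ℝ) : ‖Complex.exp (t * Complex.I) - 1‖ ≤ |t| := by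
  have h1 : ‖Complex.exp (t * Complex.I) - 1‖^2 = 2 - 2 * Real.cos t := by
    rw [Complex.sq_norm, Complex.normSq_apply]
    simp [Complex.sub_re, Complex.sub_im, Complex.exp_ofReal_mul_I_re,
      Complex.exp_ofReal_mul_I_im]
    nlinarith [Real.sin_sq_add_cos_sq t]
  have h2 : 1 - t^2/2 ≤ Real.cos t := Real.one_sub_sq_div_two_le_cos
  nlinarith [norm_nonneg (Complex.exp (t * Complex.I) - 1), abs_nonneg t, sq_abs t]

lemma key {m : ℂ} {r : ℝ} (hr : 0 < r) {x : ℂ} (hx : ‖x‖ = 1) (hb : ‖x - m‖ = r)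
    (hns : ¬ S1 ⊆ {y : ℂ | ‖y - m‖ ≤ r}) :
    ∀ δ > (0:ℝ), ∃ y : ℂ, ‖y‖ = 1 ∧ ‖y - x‖ < δ ∧ r < ‖y - m‖ := by
  by_contra hcon
  push_neg at hcon
  obtain ⟨δ, hδ, hall⟩ := hcon
  -- rotated points stay on the circle and close to x for small |t|
  have hrotnorm : ∀ t : ℝ, ‖rot t x‖ = 1 := by
    intro t
    rw [rot, norm_mul, hx, mul_one, Complex.norm_exp_ofReal_mul_I]
  have hall' : ∀ t : ℝ, |t| < δ → ‖rot t x - m‖ ≤ r := by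
    intro t ht
    refine hall (rot t x) (hrotnorm t) ?_
    have : rot t x - x = (Complex.exp (t * Complex.I) - 1) * x := by rw [rot]; ring
    rw [this, norm_mul, hx, mul_one]
    exact lt_of_le_of_lt (exp_I_sub_one_norm_le t) ht
  -- supporting halfplane of the disk at x
  have hplane : ∀ y : ℂ, ‖y - m‖ ≤ r → ((y - x) * (starRingEnd ℂ) (x - m)).re ≤ 0 := by
    intro y hy
    have h1 : ((y - m) * (starRingEnd ℂ) (x - m)).re ≤ r * r := by
      refine le_trans (Complex.re_le_norm _) ?_
      rw [norm_mul, Complex.norm_conj]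
      calc ‖y - m‖ * ‖x - m‖
          = ‖y - m‖ * ‖x - m‖ := rfl
        _ ≤ r * r := by rw [hb]; exact mul_le_mul_of_nonneg_right hy hr.le
    have h2 : ((x - m) * (starRingEnd ℂ) (x - m)).re = r * r := by
      rw [Complex.mul_conj]
      simp [Complex.normSq_eq_norm_sq, hb, sq]
    have h3 : (y - x) * (starRingEnd ℂ) (x - m)
        = (y - m) * (starRingEnd ℂ) (x - m) - (x - m) * (starRingEnd ℂ) (x - m) := by ring
    rw [h3, Complex.sub_re, h2]
    linarith
  set w : ℂ := x * (starRingEnd ℂ) (x - m) with hw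
  have gineq : ∀ t : ℝ, |t| < δ →
      (Real.cos t - 1) * w.re - Real.sin t * w.im ≤ 0 := by
    intro t ht
    have h1 : (rot t x - x) * (starRingEnd ℂ) (x - m)
        = (Complex.exp (t * Complex.I) - 1) * w := by rw [rot, hw]; ring
    have h2 := hplane (rot t x) (hall' t ht)
    rw [h1] at h2
    rw [Complex.mul_re, Complex.sub_re, Complex.sub_im, Complex.one_re, Complex.one_im,
      Complex.exp_ofReal_mul_I_re, Complex.exp_ofReal_mul_I_im] at h2
    linarith
  set ε := min δ 1 with hε
  have hε0 : 0 < ε := lt_min hδ one_pos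
  -- bounds used below
  have hsinb : ∀ t : ℝ, 0 < t → t < ε → t/2 ≤ Real.sin t ∧ 1 - Real.cos t ≤ t^2/2 := by
    intro t ht1 ht2
    have htle : t ≤ 1 := le_of_lt (lt_of_lt_of_le ht2 (min_le_right _ _))
    constructor
    · have ht2' : t^2 ≤ 1 := by nlinarith
      have hcube : t^3 ≤ t := by
        calc t^3 = t * t^2 := by ring
          _ ≤ t * 1 := mul_le_mul_of_nonneg_left ht2' ht1.le
          _ = t := mul_one t
      nlinarith [Real.sin_gt_sub_cube ht1]
    · nlinarith [Real.one_sub_sq_div_two_le_cos (x := t)]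
  -- w.im = 0
  have core : ∀ u : ℝ,
      (∀ t : ℝ, 0 < t → t < ε → Real.sin t * u ≤ (1 - Real.cos t) * w.re) → u ≤ 0 := by
    intro u hu
    refine aux_nonpos (C := |w.re|) hε0 (fun t ht1 ht2 => ?_)
    have hb1 := hsinb t ht1 ht2
    have hwre : 0 ≤ t * |w.re| := mul_nonneg ht1.le (abs_nonneg _)
    by_contra hcon2
    push_neg at hcon2
    have hsin : 0 < Real.sin t := lt_of_lt_of_le (by linarith) hb1.1
    have h1 : (1 - Real.cos t) * w.re ≤ t^2/2 * |w.re| :=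
      calc (1 - Real.cos t) * w.re ≤ (1 - Real.cos t) * |w.re| :=
            mul_le_mul_of_nonneg_left (le_abs_self _) (by linarith [Real.cos_le_one t])
        _ ≤ t^2/2 * |w.re| := mul_le_mul_of_nonneg_right hb1.2 (abs_nonneg _)
    have h2 : Real.sin t * (t * |w.re|) < Real.sin t * u := mul_lt_mul_of_pos_left hcon2 hsin
    have h3 : t/2 * (t * |w.re|) ≤ Real.sin t * (t * |w.re|) :=
      mul_le_mul_of_nonneg_right hb1.1 hwre
    have h4 := hu t ht1 ht2
    nlinarith
  have him1 : -w.im ≤ 0 := by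
    refine core _ (fun t ht1 ht2 => ?_)
    have hg := gineq t (by rw [abs_of_pos ht1]; exact lt_of_lt_of_le ht2 (min_le_left _ _))
    nlinarith
  have him2 : w.im ≤ 0 := by
    refine core _ (fun t ht1 ht2 => ?_)
    have hg := gineq (-t) (by rw [abs_neg, abs_of_pos ht1]; exact lt_of_lt_of_le ht2 (min_le_left _ _))
    rw [Real.cos_neg, Real.sin_neg] at hg
    nlinarith
  have him : w.im = 0 := le_antisymm him2 (by linarith)
  -- cos (ε/2) < 1, sin (ε/2) > 0
  have ht0 : 0 < ε/2 := by linarith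
  have ht0' : ε/2 < ε := by linarith
  have hb0 := hsinb (ε/2) ht0 ht0'
  have hsin0 : 0 < Real.sin (ε/2) := lt_of_lt_of_le (by linarith) hb0.1
  have hcos0 : Real.cos (ε/2) < 1 := by
    nlinarith [Real.sin_sq_add_cos_sq (ε/2), Real.cos_le_one (ε/2)]
  -- w.re ≥ 0
  have hre : 0 ≤ w.re := by
    have hg := gineq (ε/2) (by rw [abs_of_pos ht0]; exact lt_of_lt_of_le ht0' (min_le_left _ _))
    rw [him] at hg
    nlinarith
  -- |w| = r, hence w = r
  have habs : ‖w‖ = r := by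
    rw [hw, norm_mul, Complex.norm_conj, hx, hb, one_mul]
  have hwr : w = (r : ℂ) := by
    apply Complex.ext
    · rw [Complex.ofReal_re, ← habs, Complex.norm_def, Complex.normSq_apply, him]
      rw [show w.re * w.re + 0 * 0 = w.re^2 by ring, Real.sqrt_sq hre]
    · rw [him, Complex.ofReal_im]
  -- m = (1 - r) x
  have hxm : x - m = (r : ℂ) * x := by
    have hxx : (starRingEnd ℂ) x * x = 1 := by
      rw [mul_comm, Complex.mul_conj]
      simp [Complex.normSq_eq_norm_sq, hx]
    have h1 : (starRingEnd ℂ) (x - m) = (starRingEnd ℂ) x * (r : ℂ) := by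
      calc (starRingEnd ℂ) (x - m) = ((starRingEnd ℂ) x * x) * (starRingEnd ℂ) (x - m) := by
            rw [hxx, one_mul]
        _ = (starRingEnd ℂ) x * w := by rw [hw]; ring
        _ = (starRingEnd ℂ) x * (r : ℂ) := by rw [hwr]
    have h2 := congrArg (starRingEnd ℂ) h1
    rw [Complex.conj_conj, map_mul, Complex.conj_conj, Complex.conj_ofReal] at h2
    rw [h2]; ring
  rcases le_or_gt 1 r with hr1 | hr1
  · -- S1 ⊆ disk, contradiction with hns
    refine hns (fun y hy => ?_)
    have hy1 : ‖y‖ = 1 := hy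
    have hm : m = (1 - (r:ℂ)) * x := by
      have : m = x - (r:ℂ) * x := by linear_combination -hxm
      rw [this]; ring
    show ‖y - m‖ ≤ r
    calc ‖y - m‖ ≤ ‖y‖ + ‖m‖ := norm_sub_le _ _
      _ = 1 + ‖(1 - (r:ℂ))‖ * ‖x‖ := by rw [hy1, hm, norm_mul]
      _ = 1 + (r - 1) := by
          rw [hx, mul_one]
          congr 1
          rw [show (1 - (r:ℂ)) = ((1 - r : ℝ) : ℂ) by push_cast; ring,
            Complex.norm_real, Real.norm_eq_abs, abs_of_nonpos (by linarith)]
          ring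
      _ = r := by ring
  · -- r < 1 : the point rot (ε/2) x lies outside the disk, contradiction
    have hcalc : r < ‖rot (ε/2) x - m‖ := by
      have hmx : rot (ε/2) x - m = (Complex.exp ((ε/2 : ℝ) * Complex.I) - ((1 - r : ℝ) : ℂ)) * x := by
        rw [rot]
        have : m = x - (r:ℂ) * x := by linear_combination -hxm
        rw [this]; push_cast; ring
      have hnorm : ‖rot (ε/2) x - m‖^2 = 1 - 2*(1-r)*Real.cos (ε/2) + (1-r)^2 := by
        rw [hmx, norm_mul, hx, mul_one, Complex.sq_norm,
          Complex.normSq_apply]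
        simp only [Complex.sub_re, Complex.sub_im, Complex.exp_ofReal_mul_I_re,
          Complex.exp_ofReal_mul_I_im, Complex.ofReal_re, Complex.ofReal_im]
        nlinarith [Real.sin_sq_add_cos_sq (ε/2)]
      nlinarith [norm_nonneg (rot (ε/2) x - m)]
    have := hall' (ε/2) (by rw [abs_of_pos ht0]; exact lt_of_lt_of_le ht0' (min_le_left _ _))
    linarith


open Filter Topology

lemma contIff (f : ℂ → ℕ) (x : ℂ) :
    ContinuousWithinAt f S1 x ↔ ∀ᶠ y in 𝓝[S1] x, f y = f x := by
  unfold ContinuousWithinAt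
  rw [nhds_discrete ℕ, Filter.tendsto_pure]


/-- `x ∈ S¹` is a discontinuity point of `H_v` (for the subspace topology
of `S¹`) iff `x` lies on the boundary trace of some signal whose closed disk does not
contain all of `S¹`. -/
theorem stmt2 {n : ℕ} (v : Fin n → ℂ × ℝ) (hr : ∀ i, 0 < (v i).2)
    (x : ℂ) (hx : x ∈ S1) :
    ¬ ContinuousWithinAt (Hsum v) S1 x ↔
      ∃ i : Fin n, x ∈ bTrace (v i).1 (v i).2 ∧
        ¬ S1 ⊆ {y : ℂ | ‖y - (v i).1‖ ≤ (v i).2} := by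
  have hx1 : ‖x‖ = 1 := hx
  constructor
  · intro hdis
    by_contra hno
    push_neg at hno
    apply hdis
    rw [contIff]
    have hev : ∀ i : Fin n, ∀ᶠ y in 𝓝[S1] x,
        signal (v i).1 (v i).2 y = signal (v i).1 (v i).2 x := by
      intro i
      rcases lt_trichotomy ‖x - (v i).1‖ (v i).2 with h | h | h
      · have hmem : x ∈ Metric.ball (v i).1 (v i).2 := by
          rw [Metric.mem_ball, dist_eq_norm]; exact h
        have := (Metric.isOpen_ball.eventually_mem hmem).filter_mono
          (nhdsWithin_le_nhds (s := S1))
        refine this.mono (fun y hy => ?_)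
        rw [Metric.mem_ball, dist_eq_norm] at hy
        unfold signal
        rw [if_pos hy.le, if_pos h.le]
      · have hsub := hno i ⟨hx1, h⟩
        refine eventually_mem_nhdsWithin.mono (fun y hy => ?_)
        have h1 : ‖y - (v i).1‖ ≤ (v i).2 := hsub hy
        have h2 : ‖x - (v i).1‖ ≤ (v i).2 := h.le
        unfold signal
        rw [if_pos h1, if_pos h2]
      · have hmem : x ∈ (Metric.closedBall (v i).1 (v i).2)ᶜ := by
          rw [Set.mem_compl_iff, Metric.mem_closedBall, dist_eq_norm]
          exact not_le.2 h
        have := ((Metric.isClosed_closedBall.isOpen_compl).eventually_mem hmem).filter_mono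
          (nhdsWithin_le_nhds (s := S1))
        refine this.mono (fun y hy => ?_)
        rw [Set.mem_compl_iff, Metric.mem_closedBall, dist_eq_norm] at hy
        unfold signal
        rw [if_neg (by exact fun hc => hy hc), if_neg (not_le.2 h)]
    have hall := (Filter.eventually_all (ι := Fin n)).2 hev
    refine hall.mono (fun y hy => ?_)
    unfold Hsum
    exact Finset.sum_congr rfl (fun i _ => hy i)
  · rintro ⟨i, ⟨hxi1, hxi2⟩, hns⟩ hcont
    rw [contIff] at hcont
    -- eventually every signal is ≤ its value at x
    have hub : ∀ᶠ y in 𝓝[S1] x, ∀ j : Fin n,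
        signal (v j).1 (v j).2 y ≤ signal (v j).1 (v j).2 x := by
      refine (Filter.eventually_all (ι := Fin n)).2 (fun j => ?_)
      rcases le_or_gt ‖x - (v j).1‖ (v j).2 with h | h
      · refine Filter.Eventually.of_forall (fun y => ?_)
        unfold signal
        rw [if_pos h]
        split <;> omega
      · have hmem : x ∈ (Metric.closedBall (v j).1 (v j).2)ᶜ := by
          rw [Set.mem_compl_iff, Metric.mem_closedBall, dist_eq_norm]
          exact not_le.2 h
        have := ((Metric.isClosed_closedBall.isOpen_compl).eventually_mem hmem).filter_mono
          (nhdsWithin_le_nhds (s := S1))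
        refine this.mono (fun y hy => ?_)
        rw [Set.mem_compl_iff, Metric.mem_closedBall, dist_eq_norm] at hy
        unfold signal
        rw [if_neg (by exact fun hc => hy hc)]
        omega
    -- frequently the i-th signal drops
    have hfreq : ∃ᶠ y in 𝓝[S1] x, (v i).2 < ‖y - (v i).1‖ := by
      rw [(Metric.nhdsWithin_basis_ball (s := S1) (x := x)).frequently_iff]
      intro δ hδ
      obtain ⟨y, hy1, hy2, hy3⟩ := key (hr i) hxi1 hxi2 hns δ hδ
      refine ⟨y, ⟨?_, hy1⟩, hy3⟩
      rw [Metric.mem_ball, dist_eq_norm]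
      exact hy2
    obtain ⟨y, hy1, hy2, hy3⟩ := (hfreq.and_eventually (hub.and hcont)).exists
    have hlt : Hsum v y < Hsum v x := by
      unfold Hsum
      refine Finset.sum_lt_sum (fun j _ => hy2 j) ⟨i, Finset.mem_univ i, ?_⟩
      unfold signal
      rw [if_neg (not_le.2 hy1), if_pos hxi2.le]
      omega
    omega
end
end

section
/- Let m ∈ ℝ² and r > 0 be such that the boundary trace ∂h_{(m,r)} has exactly 0 or exactly 2 elements. Then there exists ε̄ > 0 such that for every (m',r') ∈ ℝ² × ℝ with ‖(m',r') − (m,r)‖ < ε̄ (Euclidean norm on ℝ³), the boundary trace ∂h_{(m',r')} has the same number of elements as ∂h_{(m,r)}. -/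
noncomputable section

open scoped BigOperators
open Classical

namespace Stmt3Aux

noncomputable def cc (m : ℂ) (r : ℝ) : ℝ := (1 + Complex.normSq m - r ^ 2) / 2
noncomputable def F (m : ℂ) (r : ℝ) : ℝ := Complex.normSq m - (cc m r) ^ 2

lemma normSq_eq_norm_sq (z : ℂ) : Complex.normSq z = ‖z‖ ^ 2 := by
  rw [← Complex.sq_norm]

lemma mem_iff (m : ℂ) (r : ℝ) (hr : 0 < r) (x : ℂ) :
    x ∈ bTrace m r ↔ ‖x‖ = 1 ∧ (x * (starRingEnd ℂ) m).re = cc m r := by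
  constructor
  · rintro ⟨h1, h2⟩
    refine ⟨h1, ?_⟩
    have hn : Complex.normSq (x - m) = r ^ 2 := by rw [normSq_eq_norm_sq, h2]
    rw [Complex.normSq_sub] at hn
    have hx : Complex.normSq x = 1 := by rw [normSq_eq_norm_sq, h1]; norm_num
    rw [hx] at hn
    unfold cc; linarith
  · rintro ⟨h1, h2⟩
    refine ⟨h1, ?_⟩
    have hx : Complex.normSq x = 1 := by rw [normSq_eq_norm_sq, h1]; norm_num
    have hn : Complex.normSq (x - m) = r ^ 2 := by
      rw [Complex.normSq_sub, hx, h2]; unfold cc; ring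
    rw [normSq_eq_norm_sq] at hn
    nlinarith [norm_nonneg (x - m)]

/-- the two candidate intersection points -/
noncomputable def pt (m : ℂ) (r : ℝ) (e : ℝ) : ℂ :=
  m * ((cc m r : ℂ) + (e : ℂ) * Complex.I) / (Complex.normSq m : ℂ)

lemma trace_eq (m : ℂ) (r : ℝ) (hr : 0 < r) (hm : m ≠ 0)
    (h : (cc m r) ^ 2 ≤ Complex.normSq m) :
    bTrace m r = {pt m r (Real.sqrt (F m r)), pt m r (-Real.sqrt (F m r))} := by
  have hd : Complex.normSq m ≠ 0 := by simpa using hm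
  have hs : Real.sqrt (F m r) ^ 2 = F m r := Real.sq_sqrt (by unfold F; linarith)
  ext x
  rw [mem_iff m r hr x]
  constructor
  · rintro ⟨h1, h2⟩
    have hx : Complex.normSq x = 1 := by rw [normSq_eq_norm_sq, h1]; norm_num
    set w := x * (starRingEnd ℂ) m with hw
    have hnw : Complex.normSq w = Complex.normSq m := by
      rw [hw, Complex.normSq_mul, Complex.normSq_conj, hx, one_mul]
    have him : w.im ^ 2 = F m r := by
      have : w.re ^ 2 + w.im ^ 2 = Complex.normSq m := by
        rw [← hnw, Complex.normSq_apply]; ring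
      unfold F; rw [← h2]; linarith
    have hmw : m * w = x * (Complex.normSq m : ℂ) := by
      rw [hw, ← Complex.mul_conj m]; ring
    have hxw : x = m * w / (Complex.normSq m : ℂ) := by
      rw [hmw, mul_div_assoc, div_self (by exact_mod_cast hd), mul_one]
    have hwre : w = (cc m r : ℂ) + (w.im : ℂ) * Complex.I := by
      rw [← h2]; exact (Complex.re_add_im w).symm
    have : w.im = Real.sqrt (F m r) ∨ w.im = -Real.sqrt (F m r) := by
      have h2' : w.im ^ 2 = Real.sqrt (F m r) ^ 2 := by rw [hs, him]
      rcases sq_eq_sq_iff_eq_or_eq_neg.mp h2' with h' | h'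
      · exact Or.inl h'
      · exact Or.inr h'
    rcases this with h' | h'
    · left; rw [hxw, hwre, h']; rfl
    · right; rw [hxw, hwre, h']; rfl
  · intro hx
    have key : ∀ e : ℝ, e ^ 2 = F m r → ‖pt m r e‖ = 1 ∧
        (pt m r e * (starRingEnd ℂ) m).re = cc m r := by
      intro e he
      have hne : Complex.normSq ((cc m r : ℂ) + (e : ℂ) * Complex.I) = Complex.normSq m := by
        rw [Complex.normSq_apply]
        simp
        unfold F at he; nlinarith [he]
      constructor
      · have : Complex.normSq (pt m r e) = 1 := by
          unfold pt
          rw [Complex.normSq_div, Complex.normSq_mul, hne]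
          rw [Complex.normSq_ofReal]
          field_simp
        have h0 : ‖pt m r e‖ ^ 2 = 1 := by rw [← normSq_eq_norm_sq, this]
        nlinarith [norm_nonneg (pt m r e)]
      · have hmc : m * (starRingEnd ℂ) m = (Complex.normSq m : ℂ) := Complex.mul_conj m
        have : pt m r e * (starRingEnd ℂ) m = (cc m r : ℂ) + (e : ℂ) * Complex.I := by
          have step : pt m r e * (starRingEnd ℂ) m =
              (m * (starRingEnd ℂ) m) * ((cc m r : ℂ) + (e : ℂ) * Complex.I) / (Complex.normSq m : ℂ) := by
            unfold pt; ring
          rw [step, hmc, mul_div_assoc, mul_comm, div_mul_cancel₀ _ (by exact_mod_cast hd : (Complex.normSq m : ℂ) ≠ 0)]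
        rw [this]; simp
    rcases hx with h' | h'
    · rw [h']; exact key _ hs
    · rw [Set.mem_singleton_iff] at h'
      rw [h']; exact key _ (by rw [neg_pow]; simp [hs])

lemma pt_mul_conj (m : ℂ) (r : ℝ) (e : ℝ) (hd : Complex.normSq m ≠ 0) :
    pt m r e * (starRingEnd ℂ) m = (cc m r : ℂ) + (e : ℂ) * Complex.I := by
  have hmc : m * (starRingEnd ℂ) m = (Complex.normSq m : ℂ) := Complex.mul_conj m
  have step : pt m r e * (starRingEnd ℂ) m =
      (m * (starRingEnd ℂ) m) * ((cc m r : ℂ) + (e : ℂ) * Complex.I) / (Complex.normSq m : ℂ) := by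
    unfold pt; ring
  rw [step, hmc, mul_div_assoc, mul_comm,
    div_mul_cancel₀ _ (by exact_mod_cast hd : (Complex.normSq m : ℂ) ≠ 0)]

lemma card_two (m : ℂ) (r : ℝ) (hr : 0 < r) (hF : 0 < F m r) :
    (bTrace m r).Finite ∧ (bTrace m r).ncard = 2 := by
  have hd : Complex.normSq m ≠ 0 := by
    intro h0; rw [F, h0] at hF; nlinarith [sq_nonneg (cc m r)]
  have hm : m ≠ 0 := fun h0 => hd (by simp [h0])
  have hle : (cc m r) ^ 2 ≤ Complex.normSq m := by unfold F at hF; linarith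
  rw [trace_eq m r hr hm hle]
  have hs : 0 < Real.sqrt (F m r) := Real.sqrt_pos.mpr hF
  have hne : pt m r (Real.sqrt (F m r)) ≠ pt m r (-Real.sqrt (F m r)) := by
    intro heq
    have := congrArg (fun z => (z * (starRingEnd ℂ) m).im) heq
    simp only [pt_mul_conj m r _ hd] at this
    simp at this
    linarith
  exact ⟨(Set.finite_singleton _).insert _, Set.ncard_pair hne⟩

lemma re_eq_cc (m x : ℂ) (r : ℝ) (h1 : ‖x‖ = 1) (h2 : ‖x - m‖ = r) :
    (x * (starRingEnd ℂ) m).re = cc m r := by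
  have hn : Complex.normSq (x - m) = r ^ 2 := by rw [normSq_eq_norm_sq, h2]
  rw [Complex.normSq_sub] at hn
  have hx : Complex.normSq x = 1 := by rw [normSq_eq_norm_sq, h1]; norm_num
  rw [hx] at hn
  unfold cc; linarith

lemma empty_of_F_neg (m : ℂ) (r : ℝ) (hF : F m r < 0) : bTrace m r = ∅ := by
  ext x
  simp only [Set.mem_empty_iff_false, iff_false]
  rintro ⟨h1, h2⟩
  have hre := re_eq_cc m x r h1 h2
  have hx : Complex.normSq x = 1 := by rw [normSq_eq_norm_sq, h1]; norm_num
  have hcs : (x * (starRingEnd ℂ) m).re ^ 2 ≤ Complex.normSq m := by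
    have h3 : Complex.normSq (x * (starRingEnd ℂ) m) = Complex.normSq m := by
      rw [Complex.normSq_mul, Complex.normSq_conj, hx, one_mul]
    rw [Complex.normSq_apply] at h3
    nlinarith [sq_nonneg (x * (starRingEnd ℂ) m).im]
  rw [hre] at hcs
  unfold F at hF; linarith

lemma nonempty_of_F_nonneg (m : ℂ) (r : ℝ) (hr : 0 < r) (hF : 0 ≤ F m r) :
    (bTrace m r).Nonempty := by
  by_cases hm : m = 0
  · have hc : cc m r = 0 := by
      have : Complex.normSq m = 0 := by simp [hm]
      rw [F, this] at hF
      nlinarith [sq_nonneg (cc m r)]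
    have hr1 : r = 1 := by
      rw [cc, hm] at hc; simp at hc
      nlinarith
    exact ⟨1, by simp [bTrace, hm, hr1]⟩
  · have hle : (cc m r) ^ 2 ≤ Complex.normSq m := by unfold F at hF; linarith
    exact ⟨pt m r (Real.sqrt (F m r)), by rw [trace_eq m r hr hm hle]; left; rfl⟩

lemma F_pos_of_two (m : ℂ) (r : ℝ) (hr : 0 < r) (h2 : (bTrace m r).ncard = 2) :
    0 < F m r := by
  by_contra hF
  push_neg at hF
  rcases lt_or_eq_of_le hF with hlt | heq
  · rw [empty_of_F_neg m r hlt] at h2; simp at h2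
  · by_cases hm : m = 0
    · have hc : cc m r = 0 := by
        have h0 : Complex.normSq m = 0 := by simp [hm]
        rw [F, h0] at heq
        nlinarith [sq_nonneg (cc m r)]
      have hr1 : r = 1 := by
        rw [cc, hm] at hc; simp at hc; nlinarith
      have hsub : ({1, -1, Complex.I} : Set ℂ) ⊆ bTrace m r := by
        rintro x hx
        rcases hx with h | h | h <;> subst h <;> simp [bTrace, hm, hr1]
      by_cases hfin : (bTrace m r).Finite
      · have h3 : ({1, -1, Complex.I} : Set ℂ).ncard = 3 := by
          rw [Set.ncard_eq_three]
          exact ⟨1, -1, Complex.I, by norm_num, by simp [Complex.ext_iff], by simp [Complex.ext_iff], rfl⟩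
        have := Set.ncard_le_ncard hsub hfin
        rw [h3, h2] at this; omega
      · rw [Set.Infinite.ncard hfin] at h2; omega
    · have hle : (cc m r) ^ 2 ≤ Complex.normSq m := le_of_eq (by unfold F at heq; linarith)
      have hs0 : Real.sqrt (F m r) = 0 := by rw [heq, Real.sqrt_zero]
      rw [trace_eq m r hr hm hle, hs0] at h2
      simp at h2

lemma F_neg_of_empty (m : ℂ) (r : ℝ) (hr : 0 < r) (he : bTrace m r = ∅) :
    F m r < 0 := by
  by_contra hF
  push_neg at hF
  rcases nonempty_of_F_nonneg m r hr hF with ⟨x, hx⟩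
  rw [he] at hx; exact hx

lemma contF : Continuous fun p : ℂ × ℝ => F p.1 p.2 := by
  unfold F cc
  have h1 : Continuous fun p : ℂ × ℝ => Complex.normSq p.1 :=
    Complex.continuous_normSq.comp continuous_fst
  continuity

end Stmt3Aux

/-- if `∂h_{(m,r)}` has exactly 0 or exactly 2 elements, then all
sufficiently small perturbations of `(m,r)` (in the Euclidean norm on `ℝ³`) leave
the number of elements of the boundary trace unchanged. -/
theorem stmt3 (m : ℂ) (r : ℝ) (hr : 0 < r)
    (h : bTrace m r = ∅ ∨ (bTrace m r).ncard = 2) :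
    ∃ ε > (0 : ℝ), ∀ m' : ℂ, ∀ r' : ℝ,
      Real.sqrt (‖m' - m‖ ^ 2 + (r' - r) ^ 2) < ε →
      (bTrace m' r').Finite ∧ (bTrace m' r').ncard = (bTrace m r).ncard := by
  have hdist : ∀ (m' : ℂ) (r' : ℝ),
      dist ((m', r') : ℂ × ℝ) ((m, r) : ℂ × ℝ) ≤ Real.sqrt (‖m' - m‖ ^ 2 + (r' - r) ^ 2) := by
    intro m' r'
    rw [Prod.dist_eq]
    apply max_le
    · have hh : dist m' m = Real.sqrt (‖m' - m‖ ^ 2) := by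
        rw [dist_eq_norm, Real.sqrt_sq (norm_nonneg _)]
      rw [hh]
      exact Real.sqrt_le_sqrt (by nlinarith [sq_nonneg (r' - r)])
    · have hh : dist r' r = Real.sqrt ((r' - r) ^ 2) := by
        rw [Real.dist_eq, Real.sqrt_sq_eq_abs]
      rw [hh]
      exact Real.sqrt_le_sqrt (by nlinarith [sq_nonneg ‖m' - m‖])
  rcases h with he | h2
  · have hF0 : Stmt3Aux.F m r < 0 := Stmt3Aux.F_neg_of_empty m r hr he
    rcases Metric.continuousAt_iff.mp (Stmt3Aux.contF.continuousAt (x := (m, r)))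
      (-Stmt3Aux.F m r) (by linarith) with ⟨δ, hδ, hδ'⟩
    refine ⟨δ, hδ, fun m' r' hlt => ?_⟩
    have hd : dist ((m', r') : ℂ × ℝ) ((m, r) : ℂ × ℝ) < δ := lt_of_le_of_lt (hdist m' r') hlt
    have habs : |Stmt3Aux.F m' r' - Stmt3Aux.F m r| < -Stmt3Aux.F m r := by
      simpa [Real.dist_eq] using hδ' hd
    have hF' : Stmt3Aux.F m' r' < 0 := by
      have := abs_lt.mp habs; linarith [this.2]
    have he' := Stmt3Aux.empty_of_F_neg m' r' hF'
    rw [he', he]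
    simp
  · have hF0 : 0 < Stmt3Aux.F m r := Stmt3Aux.F_pos_of_two m r hr h2
    rcases Metric.continuousAt_iff.mp (Stmt3Aux.contF.continuousAt (x := (m, r)))
      (Stmt3Aux.F m r) hF0 with ⟨δ, hδ, hδ'⟩
    refine ⟨min δ r, lt_min hδ hr, fun m' r' hlt => ?_⟩
    have hd : dist ((m', r') : ℂ × ℝ) ((m, r) : ℂ × ℝ) < δ :=
      lt_of_le_of_lt (hdist m' r') (lt_of_lt_of_le hlt (min_le_left _ _))
    have habs : |Stmt3Aux.F m' r' - Stmt3Aux.F m r| < Stmt3Aux.F m r := by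
      simpa [Real.dist_eq] using hδ' hd
    have hF' : 0 < Stmt3Aux.F m' r' := by
      have := abs_lt.mp habs; linarith [this.1]
    have hr' : 0 < r' := by
      have h1 : |r' - r| ≤ Real.sqrt (‖m' - m‖ ^ 2 + (r' - r) ^ 2) := by
        rw [← Real.sqrt_sq_eq_abs]
        exact Real.sqrt_le_sqrt (by nlinarith [sq_nonneg ‖m' - m‖])
      have h2' := lt_of_le_of_lt h1 (lt_of_lt_of_le hlt (min_le_right _ _))
      have := abs_lt.mp h2'
      linarith [this.1]
    rcases Stmt3Aux.card_two m' r' hr' hF' with ⟨hfin, hcard⟩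
    exact ⟨hfin, by rw [hcard, h2]⟩
end
end

section
/- Let m ∈ ℝ² and r > 0 be such that the boundary trace ∂h_{(m,r)} has exactly one element or is infinite. Then for every ε̄ > 0 and every k ∈ {0,1,2} there exists (m',r') ∈ ℝ² × ℝ with 0 < ‖(m',r') − (m,r)‖ < ε̄ (Euclidean norm on ℝ³) such that the boundary trace ∂h_{(m',r')} has exactly k elements. -/
noncomputable section

open scoped BigOperators
open Classical

lemma norm_sub_sq'' (x m : ℂ) :
    ‖x - m‖ ^ 2 = ‖x‖ ^ 2 - 2 * (x * (starRingEnd ℂ) m).re + ‖m‖ ^ 2 := by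
  simp only [Complex.sq_norm, Complex.normSq_apply, Complex.sub_re,
    Complex.sub_im, Complex.mul_re, Complex.mul_im, Complex.conj_re, Complex.conj_im]
  ring

lemma mem_bTrace_iff (m : ℂ) (r : ℝ) (hr : 0 ≤ r) (x : ℂ) :
    x ∈ bTrace m r ↔ ‖x‖ = 1 ∧ (x * (starRingEnd ℂ) m).re = (1 + ‖m‖ ^ 2 - r ^ 2) / 2 := by
  constructor
  · rintro ⟨h1, h2⟩
    refine ⟨h1, ?_⟩
    have hk := norm_sub_sq'' x m
    rw [h1, h2] at hk
    linarith
  · rintro ⟨h1, h2⟩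
    refine ⟨h1, ?_⟩
    have hk : ‖x - m‖ ^ 2 = r ^ 2 := by rw [norm_sub_sq'', h1, h2]; ring
    rw [← Real.sqrt_sq (norm_nonneg (x - m)), hk, Real.sqrt_sq hr]

lemma bTrace_eq_empty (m : ℂ) (r : ℝ) (hr : 0 ≤ r)
    (hc : ‖m‖ ^ 2 < ((1 + ‖m‖ ^ 2 - r ^ 2) / 2) ^ 2) : bTrace m r = ∅ := by
  ext x
  simp only [Set.mem_empty_iff_false, iff_false]
  intro hx
  obtain ⟨h1, h2⟩ := (mem_bTrace_iff m r hr x).mp hx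
  have hb : |(x * (starRingEnd ℂ) m).re| ≤ ‖x * (starRingEnd ℂ) m‖ := Complex.abs_re_le_norm _
  rw [norm_mul, h1, one_mul, h2] at hb
  have hcm : ‖(starRingEnd ℂ) m‖ = ‖m‖ := by simp
  rw [hcm] at hb
  have h3 := abs_nonneg ((1 + ‖m‖ ^ 2 - r ^ 2) / 2)
  nlinarith [sq_abs ((1 + ‖m‖ ^ 2 - r ^ 2) / 2), norm_nonneg m]

lemma conj_mul_self (m : ℂ) : (starRingEnd ℂ) m * m = ((‖m‖ ^ 2 : ℝ) : ℂ) := by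
  rw [mul_comm, Complex.mul_conj, Complex.normSq_eq_norm_sq]

lemma bTrace_tangent (m : ℂ) (r : ℝ) (hr : 0 ≤ r) (hm : m ≠ 0)
    (hc : ((1 + ‖m‖ ^ 2 - r ^ 2) / 2) ^ 2 = ‖m‖ ^ 2) :
    bTrace m r = {((((1 + ‖m‖ ^ 2 - r ^ 2) / 2) / ‖m‖ ^ 2 : ℝ) : ℂ) * m} := by
  have hd : 0 < ‖m‖ := norm_pos_iff.mpr hm
  have hne : ((‖m‖ ^ 2 : ℝ) : ℂ) ≠ 0 := by
    simp only [ne_eq, Complex.ofReal_eq_zero]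
    positivity
  set c : ℝ := (1 + ‖m‖ ^ 2 - r ^ 2) / 2 with hcdef
  ext x
  simp only [Set.mem_singleton_iff, mem_bTrace_iff m r hr]
  constructor
  · rintro ⟨h1, h2⟩
    set w := x * (starRingEnd ℂ) m with hw
    have hnw : ‖w‖ = ‖m‖ := by rw [hw, norm_mul, h1, one_mul]; simp
    have hsq : w.re ^ 2 + w.im ^ 2 = ‖m‖ ^ 2 := by
      rw [← hnw]
      rw [Complex.sq_norm, Complex.normSq_apply]; ring
    have him : w.im = 0 := by
      have : w.im ^ 2 = 0 := by nlinarith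
      exact pow_eq_zero_iff two_ne_zero |>.mp this
    have hweq : w = ((c : ℝ) : ℂ) := Complex.ext (by simpa using h2) (by simpa using him)
    have hx : x * ((starRingEnd ℂ) m * m) = ((c : ℝ) : ℂ) * m := by
      rw [← mul_assoc, ← hw, hweq]
    rw [conj_mul_self] at hx
    have hx2 : x = ((c : ℝ) : ℂ) * m / ((‖m‖ ^ 2 : ℝ) : ℂ) := by
      rw [eq_div_iff hne]; exact hx
    rw [hx2]
    push_cast
    ring
  · rintro rfl
    have habs : |c| = ‖m‖ := by
      rw [← Real.sqrt_sq_eq_abs, hc, Real.sqrt_sq hd.le]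
    constructor
    · rw [norm_mul, Complex.norm_real, Real.norm_eq_abs, abs_div, habs,
        abs_of_nonneg (by positivity : (0:ℝ) ≤ ‖m‖ ^ 2)]
      have hane : ‖m‖ ≠ 0 := by exact hd.ne'
      rw [pow_two]; field_simp
    · rw [mul_assoc, Complex.mul_conj]
      have hns : ((Complex.normSq m : ℝ) : ℂ) = ((‖m‖ ^ 2 : ℝ) : ℂ) := by
        rw [Complex.normSq_eq_norm_sq]
      rw [hns, ← Complex.ofReal_mul, Complex.ofReal_re]
      have hane : ‖m‖ ≠ 0 := by exact hd.ne'
      field_simp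
      rw [hcdef]; ring

lemma pt_mem (m : ℂ) (hm : m ≠ 0) (c t : ℝ) (h : c ^ 2 + t ^ 2 = ‖m‖ ^ 2) :
    ‖((c : ℂ) + (t : ℂ) * Complex.I) * m / ((‖m‖ ^ 2 : ℝ) : ℂ)‖ = 1 ∧
    ((((c : ℂ) + (t : ℂ) * Complex.I) * m / ((‖m‖ ^ 2 : ℝ) : ℂ)) * (starRingEnd ℂ) m).re = c := by
  have hd : 0 < ‖m‖ := norm_pos_iff.mpr hm
  have hane : ‖m‖ ≠ 0 := by exact hd.ne'
  have hne : ((‖m‖ ^ 2 : ℝ) : ℂ) ≠ 0 := by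
    simp only [ne_eq, Complex.ofReal_eq_zero]; positivity
  have h1 : ‖(c : ℂ) + (t : ℂ) * Complex.I‖ = ‖m‖ := by
    rw [Complex.norm_def]
    have : Complex.normSq ((c : ℂ) + (t : ℂ) * Complex.I) = ‖m‖ ^ 2 := by
      simp only [Complex.normSq_apply, Complex.add_re, Complex.add_im, Complex.ofReal_re,
        Complex.ofReal_im, Complex.mul_re, Complex.mul_im, Complex.I_re, Complex.I_im]
      nlinarith
    rw [this, Real.sqrt_sq hd.le]
  have hzc : (((c : ℂ) + (t : ℂ) * Complex.I) * m / ((‖m‖ ^ 2 : ℝ) : ℂ)) * (starRingEnd ℂ) m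
      = (c : ℂ) + (t : ℂ) * Complex.I := by
    rw [div_mul_eq_mul_div, mul_assoc, Complex.mul_conj]
    have hns : ((Complex.normSq m : ℝ) : ℂ) = ((‖m‖ ^ 2 : ℝ) : ℂ) := by
      rw [Complex.normSq_eq_norm_sq]
    rw [hns, mul_div_assoc, div_self hne, mul_one]
  constructor
  · rw [norm_div, norm_mul, h1, Complex.norm_real, Real.norm_eq_abs,
      abs_of_nonneg (by positivity : (0:ℝ) ≤ ‖m‖ ^ 2), pow_two]
    field_simp
  · rw [hzc]; simp

lemma bTrace_pair (m : ℂ) (r : ℝ) (hr : 0 ≤ r) (hm : m ≠ 0)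
    (hc : ((1 + ‖m‖ ^ 2 - r ^ 2) / 2) ^ 2 < ‖m‖ ^ 2) :
    (bTrace m r).Finite ∧ (bTrace m r).ncard = 2 := by
  have hd : 0 < ‖m‖ := norm_pos_iff.mpr hm
  have hne : ((‖m‖ ^ 2 : ℝ) : ℂ) ≠ 0 := by
    simp only [ne_eq, Complex.ofReal_eq_zero]; positivity
  set c : ℝ := (1 + ‖m‖ ^ 2 - r ^ 2) / 2 with hcdef
  set s : ℝ := Real.sqrt (‖m‖ ^ 2 - c ^ 2) with hsdef
  have hs2 : s ^ 2 = ‖m‖ ^ 2 - c ^ 2 := Real.sq_sqrt (by linarith)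
  have hspos : 0 < s := Real.sqrt_pos.mpr (by linarith)
  set p : ℂ := ((c : ℂ) + (s : ℂ) * Complex.I) * m / ((‖m‖ ^ 2 : ℝ) : ℂ) with hpdef
  set q : ℂ := ((c : ℂ) + ((-s : ℝ) : ℂ) * Complex.I) * m / ((‖m‖ ^ 2 : ℝ) : ℂ) with hqdef
  have hset : bTrace m r = {p, q} := by
    ext x
    rw [mem_bTrace_iff m r hr]
    simp only [Set.mem_insert_iff, Set.mem_singleton_iff]
    constructor
    · rintro ⟨h1, h2⟩
      set w := x * (starRingEnd ℂ) m with hw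
      have hnw : ‖w‖ = ‖m‖ := by rw [hw, norm_mul, h1, one_mul]; simp
      have hsq : w.re ^ 2 + w.im ^ 2 = ‖m‖ ^ 2 := by
        rw [← hnw]
        rw [Complex.sq_norm, Complex.normSq_apply]; ring
      have him : (w.im - s) * (w.im + s) = 0 := by nlinarith
      have hxw : x = w * m / ((‖m‖ ^ 2 : ℝ) : ℂ) := by
        rw [eq_div_iff hne]
        rw [← conj_mul_self m, ← mul_assoc, ← hw]
      rw [← hcdef] at h2
      rcases mul_eq_zero.mp him with h3 | h3
      · left
        have hweq : w = (c : ℂ) + (s : ℂ) * Complex.I := by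
          refine Complex.ext ?_ ?_
          · simpa using h2
          · simp only [Complex.add_im, Complex.ofReal_im, Complex.mul_im, Complex.ofReal_re,
              Complex.I_im, Complex.I_re]
            linarith
        rw [hxw, hweq]
      · right
        have hweq : w = (c : ℂ) + ((-s : ℝ) : ℂ) * Complex.I := by
          refine Complex.ext ?_ ?_
          · simpa using h2
          · simp only [Complex.add_im, Complex.ofReal_im, Complex.mul_im, Complex.ofReal_re,
              Complex.I_im, Complex.I_re]
            linarith
        rw [hxw, hweq]
    · rintro (rfl | rfl)
      · exact pt_mem m hm c s (by linarith)
      · exact pt_mem m hm c (-s) (by nlinarith)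
  have hpq : p ≠ q := by
    intro heq
    rw [hpdef, hqdef, div_eq_div_iff hne hne] at heq
    have h4 : ((s : ℂ) - ((-s : ℝ) : ℂ)) * (Complex.I * (m * ((‖m‖ ^ 2 : ℝ) : ℂ))) = 0 := by
      linear_combination heq
    rcases mul_eq_zero.mp h4 with h5 | h5
    · have h6 : s - (-s) = 0 := by exact_mod_cast h5
      linarith
    · rcases mul_eq_zero.mp h5 with h6 | h6
      · exact Complex.I_ne_zero h6
      · rcases mul_eq_zero.mp h6 with h7 | h7
        · exact hm h7
        · exact hne h7
  rw [hset]
  exact ⟨Set.toFinite _, Set.ncard_pair hpq⟩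

-- distance helper
lemma dist_same (m : ℂ) (r r' : ℝ) :
    Real.sqrt (‖m - m‖ ^ 2 + (r' - r) ^ 2) = |r' - r| := by
  simp [Real.sqrt_sq_eq_abs]


set_option maxHeartbeats 1000000 in
/-- if `∂h_{(m,r)}` has exactly one element or is infinite, then
arbitrarily small nonzero perturbations of `(m,r)` (in the Euclidean norm on `ℝ³`)
realize boundary traces with exactly `k` elements, for each `k ∈ {0,1,2}`. -/
theorem stmt4 (m : ℂ) (r : ℝ) (hr : 0 < r)
    (h : (bTrace m r).ncard = 1 ∨ (bTrace m r).Infinite) :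
    ∀ ε > (0 : ℝ), ∀ k ∈ ({0, 1, 2} : Set ℕ), ∃ m' : ℂ, ∃ r' : ℝ,
      0 < Real.sqrt (‖m' - m‖ ^ 2 + (r' - r) ^ 2) ∧
      Real.sqrt (‖m' - m‖ ^ 2 + (r' - r) ^ 2) < ε ∧
      (bTrace m' r').Finite ∧ (bTrace m' r').ncard = k := by
  intro ε hε k hk
  have hk3 : k = 0 ∨ k = 1 ∨ k = 2 := by simpa using hk
  by_cases hm : m = 0
  · subst hm
    have hr1 : r = 1 := by
      by_contra hne
      have hempty : bTrace 0 r = ∅ := by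
        ext x
        simp only [Set.mem_empty_iff_false, iff_false]
        rintro ⟨h1, h2⟩
        rw [sub_zero, h1] at h2
        exact hne h2.symm
      rw [hempty] at h
      rcases h with h | h
      · simp at h
      · exact Set.finite_empty.not_infinite h
    subst hr1
    rcases hk3 with rfl | rfl | rfl
    · -- k = 0
      set δ : ℝ := min (ε / 2) (1 / 2) with hδdef
      have hδ0 : 0 < δ := by positivity
      have hδε : δ ≤ ε / 2 := min_le_left _ _
      have hδ1 : δ ≤ 1 / 2 := min_le_right _ _
      refine ⟨0, 1 - δ, ?_, ?_, ?_, ?_⟩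
      · rw [dist_same]
        rw [abs_pos]
        intro hcon; simp at hcon; linarith
      · rw [dist_same]
        rw [abs_lt]; constructor <;> [linarith; linarith]
      all_goals {
        have hempty : bTrace 0 (1 - δ) = ∅ := by
          ext x
          simp only [Set.mem_empty_iff_false, iff_false]
          rintro ⟨h1, h2⟩
          rw [sub_zero, h1] at h2
          linarith
        rw [hempty]
        first
        | exact Set.finite_empty
        | simp }
    · -- k = 1
      set s : ℝ := min (ε / 4) 1 with hsdef
      have hs0 : 0 < s := by positivity
      have hsε : s ≤ ε / 4 := min_le_left _ _
      have hs1 : s ≤ 1 := min_le_right _ _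
      refine ⟨((s : ℝ) : ℂ), 1 + s, ?_, ?_, ?_, ?_⟩
      · apply Real.sqrt_pos.mpr
        have : ‖((s : ℝ) : ℂ) - 0‖ = s := by
          rw [sub_zero, Complex.norm_real, Real.norm_eq_abs, abs_of_pos hs0]
        rw [this]
        nlinarith
      · rw [Real.sqrt_lt' hε]
        have : ‖((s : ℝ) : ℂ) - 0‖ = s := by
          rw [sub_zero, Complex.norm_real, Real.norm_eq_abs, abs_of_pos hs0]
        rw [this]
        nlinarith
      all_goals {
        have hnm : ‖((s : ℝ) : ℂ)‖ = s := by
          rw [Complex.norm_real, Real.norm_eq_abs, abs_of_pos hs0]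
        have hm' : ((s : ℝ) : ℂ) ≠ 0 := by
          simp only [ne_eq, Complex.ofReal_eq_zero]; exact hs0.ne'
        have htan := bTrace_tangent ((s : ℝ) : ℂ) (1 + s) (by linarith) hm' (by rw [hnm]; ring)
        rw [htan]
        first
        | exact Set.finite_singleton _
        | exact Set.ncard_singleton _ }
    · -- k = 2
      set s : ℝ := min (ε / 2) 1 with hsdef
      have hs0 : 0 < s := by positivity
      have hsε : s ≤ ε / 2 := min_le_left _ _
      have hs1 : s ≤ 1 := min_le_right _ _
      have hnm : ‖((s : ℝ) : ℂ)‖ = s := by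
        rw [Complex.norm_real, Real.norm_eq_abs, abs_of_pos hs0]
      have hm' : ((s : ℝ) : ℂ) ≠ 0 := by
        simp only [ne_eq, Complex.ofReal_eq_zero]; exact hs0.ne'
      have hss : s ^ 2 ≤ 1 := by nlinarith
      have hpair := bTrace_pair ((s : ℝ) : ℂ) 1 (by norm_num) hm' (by
        rw [hnm]
        nlinarith [mul_pos hs0 hs0, mul_le_mul_of_nonneg_left hss (sq_nonneg s)])
      refine ⟨((s : ℝ) : ℂ), 1, ?_, ?_, hpair.1, hpair.2⟩
      · apply Real.sqrt_pos.mpr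
        rw [sub_zero, hnm]
        nlinarith
      · rw [Real.sqrt_lt' hε, sub_zero, hnm]
        nlinarith
  · -- m ≠ 0
    have hd : 0 < ‖m‖ := norm_pos_iff.mpr hm
    have hc2 : ((1 + ‖m‖ ^ 2 - r ^ 2) / 2) ^ 2 = ‖m‖ ^ 2 := by
      rcases lt_trichotomy (((1 + ‖m‖ ^ 2 - r ^ 2) / 2) ^ 2) (‖m‖ ^ 2) with hlt | heq | hgt
      · exfalso
        have hpair := bTrace_pair m r hr.le hm hlt
        rcases h with h | h
        · rw [hpair.2] at h; norm_num at h
        · exact hpair.1.not_infinite h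
      · exact heq
      · exfalso
        have hempty := bTrace_eq_empty m r hr.le hgt
        rw [hempty] at h
        rcases h with h | h
        · simp at h
        · exact Set.finite_empty.not_infinite h
    have hcd : (1 + ‖m‖ ^ 2 - r ^ 2) / 2 = ‖m‖ ∨ (1 + ‖m‖ ^ 2 - r ^ 2) / 2 = -‖m‖ := by
      have hfac : ((1 + ‖m‖ ^ 2 - r ^ 2) / 2 - ‖m‖) * ((1 + ‖m‖ ^ 2 - r ^ 2) / 2 + ‖m‖) = 0 := by
        linear_combination hc2
      rcases mul_eq_zero.mp hfac with h1 | h1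
      · left; linarith
      · right; linarith
    rcases hk3 with rfl | rfl | rfl
    · -- k = 0
      set δ : ℝ := min (ε / 2) (r / 2) with hδdef
      have hδ0 : 0 < δ := by positivity
      have hδε : δ ≤ ε / 2 := min_le_left _ _
      have hδr : δ ≤ r / 2 := min_le_right _ _
      rcases hcd with hcp | hcm2
      · -- c = ‖m‖ : shrink r
        refine ⟨m, r - δ, ?_, ?_, ?_, ?_⟩
        · rw [dist_same, abs_pos]; intro hcon; linarith
        · rw [dist_same, abs_lt]; constructor <;> linarith
        all_goals {
          have hempty : bTrace m (r - δ) = ∅ := by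
            apply bTrace_eq_empty m (r - δ) (by linarith)
            have hkey : (1 + ‖m‖ ^ 2 - (r - δ) ^ 2) / 2 = ‖m‖ + δ * r - δ ^ 2 / 2 := by
              linear_combination hcp
            rw [hkey]
            have ht : 0 < δ * r - δ ^ 2 / 2 := by
              nlinarith [mul_le_mul_of_nonneg_left hδr hδ0.le]
            nlinarith [mul_pos hd ht, sq_nonneg (δ * r - δ ^ 2 / 2)]
          rw [hempty]
          first
          | exact Set.finite_empty
          | simp }
      · -- c = -‖m‖ : grow r
        refine ⟨m, r + δ, ?_, ?_, ?_, ?_⟩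
        · rw [dist_same, abs_pos]; intro hcon; linarith
        · rw [dist_same, abs_lt]; constructor <;> linarith
        all_goals {
          have hempty : bTrace m (r + δ) = ∅ := by
            apply bTrace_eq_empty m (r + δ) (by linarith)
            have hkey : (1 + ‖m‖ ^ 2 - (r + δ) ^ 2) / 2 = -‖m‖ - δ * r - δ ^ 2 / 2 := by
              linear_combination hcm2
            rw [hkey]
            have ht : 0 < δ * r + δ ^ 2 / 2 := by positivity
            nlinarith [mul_pos hd ht, sq_nonneg (δ * r + δ ^ 2 / 2)]
          rw [hempty]
          first
          | exact Set.finite_empty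
          | simp }
    · -- k = 1
      set s : ℝ := ε / (2 * (‖m‖ + 1)) with hsdef
      have hs0 : 0 < s := by positivity
      have hsd : s * ‖m‖ < ε / 2 := by
        rw [hsdef]
        rw [div_mul_eq_mul_div, div_lt_div_iff₀ (by positivity) (by norm_num)]
        nlinarith
      have hnm' : ‖(((1 + s : ℝ)) : ℂ) * m‖ = (1 + s) * ‖m‖ := by
        rw [norm_mul, Complex.norm_real, Real.norm_eq_abs, abs_of_pos (by linarith)]
      have hmne : (((1 + s : ℝ)) : ℂ) * m ≠ 0 := by
        apply mul_ne_zero _ hm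
        simp only [ne_eq, Complex.ofReal_eq_zero]
        intro hcon; linarith
      have hmm : (((1 + s : ℝ)) : ℂ) * m - m = ((s : ℝ) : ℂ) * m := by
        push_cast; ring
      have hnmm : ‖(((1 + s : ℝ)) : ℂ) * m - m‖ = s * ‖m‖ := by
        rw [hmm, norm_mul, Complex.norm_real, Real.norm_eq_abs, abs_of_pos hs0]
      rcases hcd with hcp | hcm2
      · -- c = ‖m‖, r = |1 - ‖m‖|
        have hrabs : r = |1 - ‖m‖| := by
          rw [← Real.sqrt_sq hr.le, ← Real.sqrt_sq_eq_abs]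
          congr 1
          linear_combination -2 * hcp
        set r' : ℝ := |1 - (1 + s) * ‖m‖| with hr'def
        have hrr : |r' - r| ≤ s * ‖m‖ := by
          rw [hr'def, hrabs]
          calc |(|1 - (1 + s) * ‖m‖|) - (|1 - ‖m‖|)| ≤ |(1 - (1 + s) * ‖m‖) - (1 - ‖m‖)| :=
                abs_abs_sub_abs_le_abs_sub _ _
          _ = s * ‖m‖ := by rw [show (1 - (1 + s) * ‖m‖) - (1 - ‖m‖) = -(s * ‖m‖) by ring,
                abs_neg, abs_of_pos (by positivity)]
        have hrrsq : (r' - r) ^ 2 ≤ (s * ‖m‖) ^ 2 := by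
          have := abs_le.mp hrr
          nlinarith
        have htan := bTrace_tangent ((((1 + s : ℝ)) : ℂ) * m) r' (abs_nonneg _) hmne
          (by rw [hnm', hr'def, sq_abs]; ring)
        refine ⟨(((1 + s : ℝ)) : ℂ) * m, r', ?_, ?_, ?_, ?_⟩
        · apply Real.sqrt_pos.mpr
          rw [hnmm]
          nlinarith [sq_nonneg (r' - r), pow_pos (mul_pos hs0 hd) 2]
        · rw [Real.sqrt_lt' hε, hnmm]
          have h2 : (s * ‖m‖) ^ 2 < (ε / 2) ^ 2 :=
            pow_lt_pow_left₀ hsd (mul_pos hs0 hd).le two_ne_zero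
          nlinarith [h2, hrrsq, sq_nonneg ε]
        · rw [htan]; exact Set.finite_singleton _
        · rw [htan]; exact Set.ncard_singleton _
      · -- c = -‖m‖, r = 1 + ‖m‖
        have hrabs : r = |1 + ‖m‖| := by
          rw [← Real.sqrt_sq hr.le, ← Real.sqrt_sq_eq_abs]
          congr 1
          linear_combination -2 * hcm2
        set r' : ℝ := |1 + (1 + s) * ‖m‖| with hr'def
        have hrr : |r' - r| ≤ s * ‖m‖ := by
          rw [hr'def, hrabs]
          calc |(|1 + (1 + s) * ‖m‖|) - (|1 + ‖m‖|)| ≤ |(1 + (1 + s) * ‖m‖) - (1 + ‖m‖)| :=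
                abs_abs_sub_abs_le_abs_sub _ _
          _ = s * ‖m‖ := by rw [show (1 + (1 + s) * ‖m‖) - (1 + ‖m‖) = s * ‖m‖ by ring,
                abs_of_pos (by positivity)]
        have hrrsq : (r' - r) ^ 2 ≤ (s * ‖m‖) ^ 2 := by
          have := abs_le.mp hrr
          nlinarith
        have htan := bTrace_tangent ((((1 + s : ℝ)) : ℂ) * m) r' (abs_nonneg _) hmne
          (by rw [hnm', hr'def, sq_abs]; ring)
        refine ⟨(((1 + s : ℝ)) : ℂ) * m, r', ?_, ?_, ?_, ?_⟩
        · apply Real.sqrt_pos.mpr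
          rw [hnmm]
          nlinarith [sq_nonneg (r' - r), pow_pos (mul_pos hs0 hd) 2]
        · rw [Real.sqrt_lt' hε, hnmm]
          have h2 : (s * ‖m‖) ^ 2 < (ε / 2) ^ 2 :=
            pow_lt_pow_left₀ hsd (mul_pos hs0 hd).le two_ne_zero
          nlinarith [h2, hrrsq, sq_nonneg ε]
        · rw [htan]; exact Set.finite_singleton _
        · rw [htan]; exact Set.ncard_singleton _
    · -- k = 2
      set δ : ℝ := min (ε / 2) (min (r / 2) (‖m‖ / r)) with hδdef
      have hδ0 : 0 < δ := by positivity
      have hδε : δ ≤ ε / 2 := min_le_left _ _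
      have hδr : δ ≤ r / 2 := le_trans (min_le_right _ _) (min_le_left _ _)
      have hδd : δ ≤ ‖m‖ / r := le_trans (min_le_right _ _) (min_le_right _ _)
      have hδd' : δ * r ≤ ‖m‖ := by
        rw [← le_div_iff₀ hr]; exact hδd
      have hδsq : δ * δ ≤ ‖m‖ / 2 := by
        calc δ * δ ≤ (r / 2) * (‖m‖ / r) := by
              apply mul_le_mul hδr hδd hδ0.le (by positivity)
        _ = ‖m‖ / 2 := by field_simp
      rcases hcd with hcp | hcm2
      · -- c = ‖m‖ : grow r
        have hpair := bTrace_pair m (r + δ) (by linarith) hm (by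
          have hkey : (1 + ‖m‖ ^ 2 - (r + δ) ^ 2) / 2 = ‖m‖ - δ * r - δ ^ 2 / 2 := by
            linear_combination hcp
          rw [hkey]
          have hu1 : 0 < δ * r + δ ^ 2 / 2 := by positivity
          have hu2 : δ * r + δ ^ 2 / 2 < 2 * ‖m‖ := by nlinarith [hδd', hδsq]
          nlinarith [mul_pos hu1 (show 0 < 2 * ‖m‖ - (δ * r + δ ^ 2 / 2) by linarith)])
        refine ⟨m, r + δ, ?_, ?_, hpair.1, hpair.2⟩
        · rw [dist_same, abs_pos]; intro hcon; linarith
        · rw [dist_same, abs_lt]; constructor <;> linarith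
      · -- c = -‖m‖ : shrink r
        have hpair := bTrace_pair m (r - δ) (by linarith) hm (by
          have hkey : (1 + ‖m‖ ^ 2 - (r - δ) ^ 2) / 2 = -‖m‖ + δ * r - δ ^ 2 / 2 := by
            linear_combination hcm2
          rw [hkey]
          have hv1 : 0 < δ * r - δ ^ 2 / 2 := by
            nlinarith [mul_le_mul_of_nonneg_left hδr hδ0.le]
          have hv2 : δ * r - δ ^ 2 / 2 < 2 * ‖m‖ := by nlinarith [hδd']
          nlinarith [mul_pos hv1 (show 0 < 2 * ‖m‖ - (δ * r - δ ^ 2 / 2) by linarith)])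
        refine ⟨m, r - δ, ?_, ?_, hpair.1, hpair.2⟩
        · rw [dist_same, abs_pos]; intro hcon; linarith
        · rw [dist_same, abs_lt]; constructor <;> linarith
end
end

section
/- If f, g : S¹ → ℕ are both properly upper semicontinuous and the set {x ∈ S¹ : f(x) ≠ g(x)} is finite, then f = g. (Thus every equivalence class of functions modulo finite sets contains at most one properly u.s.c. function.) -/
noncomputable section

open scoped BigOperators
open Classical

lemma rot_mem_S1 (t : ℝ) {x : ℂ} (hx : x ∈ S1) : rot t x ∈ S1 := by
  simp only [S1, Set.mem_setOf_eq] at hx ⊢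
  rw [rot, norm_mul, hx, mul_one, Complex.norm_exp_ofReal_mul_I]

lemma rot_injOn {x : ℂ} (hx : x ≠ 0) :
    Set.InjOn (fun t => rot t x) (Set.Ioo (-1 : ℝ) 1) := by
  intro t₁ h₁ t₂ h₂ h
  simp only [rot] at h
  have hexp : Complex.exp (t₁ * Complex.I) = Complex.exp (t₂ * Complex.I) :=
    mul_right_cancel₀ hx h
  rw [Complex.exp_eq_exp_iff_exists_int] at hexp
  obtain ⟨n, hn⟩ := hexp
  have him : t₁ = t₂ + n * (2 * Real.pi) := by
    have := congrArg Complex.im hn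
    simpa using this
  have hπ := Real.pi_gt_three
  have hn0 : n = 0 := by
    by_contra h0
    have h1n : (1 : ℝ) ≤ |(n : ℝ)| := by
      exact_mod_cast Int.one_le_abs (by simpa using h0)
    have habs : |t₁ - t₂| = |(n : ℝ)| * (2 * Real.pi) := by
      rw [show t₁ - t₂ = (n : ℝ) * (2 * Real.pi) by linarith, abs_mul]
      congr 1
      exact abs_of_pos Real.two_pi_pos
    have h2 : |t₁ - t₂| < 2 := by
      rw [abs_sub_lt_iff]
      constructor <;> [linarith [h₁.1, h₁.2, h₂.1, h₂.2]; linarith [h₁.1, h₁.2, h₂.1, h₂.2]]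
    nlinarith [abs_nonneg (t₁ - t₂)]
  simp [hn0] at him
  linarith

lemma exists_good (x : ℂ) (hx : x ∈ S1) (D : Set ℂ) (hD : D.Finite)
    {lo hi : ℝ} (hlo : -1 ≤ lo) (hhi : hi ≤ 1) (hlh : lo < hi) :
    ∃ t ∈ Set.Ioo lo hi, rot t x ∉ D := by
  have hx0 : x ≠ 0 := by
    intro h0
    simp [S1, h0] at hx
  set T : Set ℝ := {t ∈ Set.Ioo lo hi | rot t x ∈ D} with hT
  have hsub : Set.Ioo lo hi ⊆ Set.Ioo (-1 : ℝ) 1 :=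
    Set.Ioo_subset_Ioo hlo hhi
  have hTfin : T.Finite := by
    apply Set.Finite.of_finite_image (f := fun t => rot t x)
    · exact hD.subset (by rintro y ⟨t, ⟨_, ht⟩, rfl⟩; exact ht)
    · exact (rot_injOn hx0).mono (fun t ht => hsub ht.1)
  have hinf : (Set.Ioo lo hi \ T).Infinite :=
    (Set.Ioo_infinite hlh).diff hTfin
  obtain ⟨t, ht⟩ := hinf.nonempty
  exact ⟨t, ht.1, fun hmem => ht.2 ⟨ht.1, hmem⟩⟩

lemma right_eq (f g : ℂ → ℕ) (h : {x ∈ S1 | f x ≠ g x}.Finite)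
    (x : ℂ) (hx : x ∈ S1) (a a' : ℕ)
    (hfa : rightVal f x a) (hga : rightVal g x a') : a = a' := by
  obtain ⟨δ, hδ, hf⟩ := hfa
  obtain ⟨δ', hδ', hg⟩ := hga
  set ε := min (min δ δ') 1 with hε
  have hε0 : 0 < ε := by positivity
  obtain ⟨t, ht, hgood⟩ := exists_good x hx _ h (lo := 0) (hi := ε)
    (by norm_num) (min_le_right _ _) hε0
  have hmem : rot t x ∈ S1 := rot_mem_S1 t hx
  have heq : f (rot t x) = g (rot t x) := by
    by_contra hne
    exact hgood ⟨hmem, hne⟩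
  rw [← hf t ht.1 (lt_of_lt_of_le ht.2 ((min_le_left _ _).trans (min_le_left _ _))),
    ← hg t ht.1 (lt_of_lt_of_le ht.2 ((min_le_left _ _).trans (min_le_right _ _))), heq]

lemma left_eq (f g : ℂ → ℕ) (h : {x ∈ S1 | f x ≠ g x}.Finite)
    (x : ℂ) (hx : x ∈ S1) (b b' : ℕ)
    (hfb : leftVal f x b) (hgb : leftVal g x b') : b = b' := by
  obtain ⟨δ, hδ, hf⟩ := hfb
  obtain ⟨δ', hδ', hg⟩ := hgb
  set ε := min (min δ δ') 1 with hε
  have hε0 : 0 < ε := by positivity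
  obtain ⟨t, ht, hgood⟩ := exists_good x hx _ h (lo := -ε) (hi := 0)
    (by have : ε ≤ 1 := min_le_right _ _; linarith) (by norm_num) (by linarith)
  have hmem : rot t x ∈ S1 := rot_mem_S1 t hx
  have heq : f (rot t x) = g (rot t x) := by
    by_contra hne
    exact hgood ⟨hmem, hne⟩
  have h1 : -δ < t := by
    have : ε ≤ δ := (min_le_left _ _).trans (min_le_left _ _)
    linarith [ht.1]
  have h2 : -δ' < t := by
    have : ε ≤ δ' := (min_le_left _ _).trans (min_le_right _ _)
    linarith [ht.1]
  rw [← hf t h1 ht.2, ← hg t h2 ht.2, heq]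

/-- two properly u.s.c. functions on `S¹` agreeing off a finite set
agree everywhere on `S¹`. -/
theorem stmt6 (f g : ℂ → ℕ) (hf : ProperlyUSC f) (hg : ProperlyUSC g)
    (h : {x ∈ S1 | f x ≠ g x}.Finite) :
    ∀ x ∈ S1, f x = g x := by
  intro x hx
  obtain ⟨a, b, hfa, hfb, hfmax⟩ := hf x hx
  obtain ⟨a', b', hga, hgb, hgmax⟩ := hg x hx
  rw [hfmax, hgmax, right_eq f g h x hx a a' hfa hga, left_eq f g h x hx b b' hfb hgb]
end
end
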